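/- Let a be real with |a| < 1/2 and set G(x) = ∫_0^∞ y^{−2a} e^{−y}/(x+y) dy for x > 0. Then for all x, z > 0 with x ≠ z, the composition of the kernels (x/y)^a e^{−(x+y)/2}/(x+y) and (z/y)^a e^{−(y+z)/2}/(y+z) satisfies ∫_0^∞ (x/y)^a · e^{−(x+y)/2}/(x+y) · (z/y)^a · e^{−(y+z)/2}/(y+z) dy = (xz)^a e^{−(x+z)/2} (G(x) − G(z))/(z − x); equivalently, this composed kernel equals the Whittaker kernel Γ(1−2a) ( W_{a+1/2,a}(x) W_{a−1/2,a}(z) − W_{a−1/2,a}(x) W_{a+1/2,a}(z) ) / ( (x−z) √(xz) ), where W_{a+1/2,a}(x) = x^{a+1/2} e^{−x/2} and W_{a−1/2,a}(x) = x^{a+1/2} e^{−x/2} ∫_0^∞ e^{−tx}(1+t)^{2a−1} dt. -/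

import Mathlib

open MeasureTheory Set

lemma myExpInt {c : ℝ} (hc : 0 < c) : ∫ t in Ioi (0:ℝ), Real.exp (-c * t) = 1 / c := by
  have h := Real.integral_rpow_mul_exp_neg_mul_Ioi one_pos hc
  simp only [sub_self, Real.rpow_zero, one_mul, Real.rpow_one, Real.Gamma_one, mul_one,
    neg_mul] at h ⊢
  exact h

lemma myIntA {a : ℝ} (ha : |a| < 1/2) {x : ℝ} (hx : 0 < x) :
    IntegrableOn (fun y : ℝ => y ^ (-2 * a) * Real.exp (-y) / (x + y)) (Ioi 0) := by
  have hs : 0 < 1 - 2 * a := by have := abs_lt.mp ha; linarith [this.2]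
  have hg : IntegrableOn (fun y : ℝ => (Real.exp (-y) * y ^ (1 - 2*a - 1)) * x⁻¹) (Ioi 0) :=
    (Real.GammaIntegral_convergent hs).mul_const _
  refine hg.integrable.mono ?_ ?_
  · apply Measurable.aestronglyMeasurable
    fun_prop
  · filter_upwards [ae_restrict_mem measurableSet_Ioi] with y hy
    rw [mem_Ioi] at hy
    rw [Real.norm_eq_abs, Real.norm_eq_abs, abs_of_nonneg (by positivity),
      abs_of_nonneg (by positivity)]
    rw [show (1 - 2*a - 1 : ℝ) = -2 * a by ring, mul_comm (Real.exp (-y)), ← div_eq_mul_inv]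
    gcongr
    linarith

set_option maxHeartbeats 1000000 in
lemma myKey {a : ℝ} (ha : |a| < 1/2) {x : ℝ} (hx : 0 < x) :
    (∫ y in Ioi (0:ℝ), y ^ (-2 * a) * Real.exp (-y) / (x + y))
      = Real.Gamma (1 - 2 * a) * ∫ t in Ioi (0:ℝ), Real.exp (-t * x) * (1 + t) ^ (2 * a - 1) := by
  have hs : 0 < 1 - 2 * a := by have := abs_lt.mp ha; linarith [this.2]
  have hmeas : AEStronglyMeasurable
      (fun p : ℝ × ℝ => p.1 ^ (-2 * a) * Real.exp (-p.1) * Real.exp (-(x + p.1) * p.2))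
      ((volume.restrict (Ioi 0)).prod (volume.restrict (Ioi 0))) := by
    apply Measurable.aestronglyMeasurable
    fun_prop
  have hint : Integrable
      (fun p : ℝ × ℝ => p.1 ^ (-2 * a) * Real.exp (-p.1) * Real.exp (-(x + p.1) * p.2))
      ((volume.restrict (Ioi 0)).prod (volume.restrict (Ioi 0))) := by
    rw [integrable_prod_iff hmeas]
    constructor
    · filter_upwards [ae_restrict_mem measurableSet_Ioi] with y hy
      rw [mem_Ioi] at hy
      exact (exp_neg_integrableOn_Ioi 0 (by positivity : (0:ℝ) < x + y)).const_mul _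
    · apply (myIntA ha hx).congr
      filter_upwards [ae_restrict_mem measurableSet_Ioi] with y hy
      rw [mem_Ioi] at hy
      have h1 : (∫ t in Ioi (0:ℝ), ‖y ^ (-2 * a) * Real.exp (-y) * Real.exp (-(x + y) * t)‖)
          = ∫ t in Ioi (0:ℝ), y ^ (-2 * a) * Real.exp (-y) * Real.exp (-(x + y) * t) := by
        refine setIntegral_congr_fun measurableSet_Ioi fun t ht => ?_
        exact Real.norm_of_nonneg (by positivity)
      rw [h1, integral_const_mul, myExpInt (by positivity : (0:ℝ) < x + y), mul_one_div]
  have hswap : (∫ y in Ioi (0:ℝ), ∫ t in Ioi (0:ℝ),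
        y ^ (-2 * a) * Real.exp (-y) * Real.exp (-(x + y) * t))
      = ∫ t in Ioi (0:ℝ), ∫ y in Ioi (0:ℝ),
        y ^ (-2 * a) * Real.exp (-y) * Real.exp (-(x + y) * t) :=
    MeasureTheory.integral_integral_swap hint
  have hL : (∫ y in Ioi (0:ℝ), ∫ t in Ioi (0:ℝ),
        y ^ (-2 * a) * Real.exp (-y) * Real.exp (-(x + y) * t))
      = ∫ y in Ioi (0:ℝ), y ^ (-2 * a) * Real.exp (-y) / (x + y) := by
    refine setIntegral_congr_fun measurableSet_Ioi fun y hy => ?_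
    rw [mem_Ioi] at hy
    rw [integral_const_mul, myExpInt (by positivity : (0:ℝ) < x + y), mul_one_div]
  have hR : (∫ t in Ioi (0:ℝ), ∫ y in Ioi (0:ℝ),
        y ^ (-2 * a) * Real.exp (-y) * Real.exp (-(x + y) * t))
      = Real.Gamma (1 - 2 * a) * ∫ t in Ioi (0:ℝ), Real.exp (-t * x) * (1 + t) ^ (2 * a - 1) := by
    have h2 : (∫ t in Ioi (0:ℝ), ∫ y in Ioi (0:ℝ),
          y ^ (-2 * a) * Real.exp (-y) * Real.exp (-(x + y) * t))
        = ∫ t in Ioi (0:ℝ), (Real.exp (-t * x) * (1 + t) ^ (2 * a - 1)) * Real.Gamma (1 - 2*a) := by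
      refine setIntegral_congr_fun measurableSet_Ioi fun t ht => ?_
      rw [mem_Ioi] at ht
      have ht1 : (0:ℝ) < 1 + t := by linarith
      have hinner : (∫ y in Ioi (0:ℝ), y ^ (-2 * a) * Real.exp (-y) * Real.exp (-(x + y) * t))
          = ∫ y in Ioi (0:ℝ), Real.exp (-t * x) * (y ^ ((1 - 2*a) - 1) * Real.exp (-((1 + t) * y))) := by
        refine setIntegral_congr_fun measurableSet_Ioi fun y hy => ?_
        have he : Real.exp (-y) * Real.exp (-(x + y) * t)
            = Real.exp (-t * x) * Real.exp (-((1 + t) * y)) := by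
          rw [← Real.exp_add, ← Real.exp_add]; congr 1; ring
        rw [mul_assoc, he, show ((1 - 2*a) - 1 : ℝ) = -2 * a by ring]; ring
      rw [hinner, integral_const_mul, Real.integral_rpow_mul_exp_neg_mul_Ioi hs ht1]
      rw [one_div, Real.inv_rpow ht1.le, ← Real.rpow_neg ht1.le,
        show -(1 - 2*a) = 2 * a - 1 by ring]
      ring
    rw [h2, integral_mul_const, mul_comm]
  rw [← hL, hswap, hR]

/-- Composition of the kernels of `R_a` and `R_{-a}`: it equals the Whittaker kernel
with parameters `κ = a ± 1/2`, `μ = a`. -/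
theorem stmt_11 (a : ℝ) (ha : |a| < 1/2)
    (G : ℝ → ℝ) (hG : ∀ x > (0:ℝ), G x = ∫ y in Ioi (0:ℝ), y ^ (-2 * a) * Real.exp (-y) / (x + y))
    (x z : ℝ) (hx : 0 < x) (hz : 0 < z) (hxz : x ≠ z) :
    (∫ y in Ioi (0:ℝ),
        (x / y) ^ a * (Real.exp (-(x + y) / 2) / (x + y)) *
          ((z / y) ^ a * (Real.exp (-(y + z) / 2) / (y + z)))) =
        (x * z) ^ a * Real.exp (-(x + z) / 2) * (G x - G z) / (z - x) ∧
    (∫ y in Ioi (0:ℝ),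
        (x / y) ^ a * (Real.exp (-(x + y) / 2) / (x + y)) *
          ((z / y) ^ a * (Real.exp (-(y + z) / 2) / (y + z)))) =
        Real.Gamma (1 - 2 * a) *
          ((x ^ (a + 1/2) * Real.exp (-x / 2)) *
              (z ^ (a + 1/2) * Real.exp (-z / 2) *
                ∫ t in Ioi (0:ℝ), Real.exp (-t * z) * (1 + t) ^ (2 * a - 1)) -
            (x ^ (a + 1/2) * Real.exp (-x / 2) *
                ∫ t in Ioi (0:ℝ), Real.exp (-t * x) * (1 + t) ^ (2 * a - 1)) *
              (z ^ (a + 1/2) * Real.exp (-z / 2))) /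
          ((x - z) * Real.sqrt (x * z)) := by
  have hzx : z - x ≠ 0 := sub_ne_zero.mpr (Ne.symm hxz)
  have hxz' : x - z ≠ 0 := sub_ne_zero.mpr hxz
  have key : ∀ y ∈ Ioi (0:ℝ),
      (x / y) ^ a * (Real.exp (-(x + y) / 2) / (x + y)) *
          ((z / y) ^ a * (Real.exp (-(y + z) / 2) / (y + z)))
        = ((x * z) ^ a * Real.exp (-(x + z) / 2) * (z - x)⁻¹) *
            (y ^ (-2 * a) * Real.exp (-y) / (x + y)
              - y ^ (-2 * a) * Real.exp (-y) / (z + y)) := by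
    intro y hy
    rw [mem_Ioi] at hy
    have hxy : x + y ≠ 0 := by positivity
    have hzy : y + z ≠ 0 := by positivity
    have hzy' : z + y ≠ 0 := by positivity
    have hya : y ^ a ≠ 0 := (Real.rpow_pos_of_pos hy a).ne'
    rw [Real.div_rpow hx.le hy.le, Real.div_rpow hz.le hy.le, Real.mul_rpow hx.le hz.le,
      show (-2 * a : ℝ) = -(a + a) by ring, Real.rpow_neg hy.le, Real.rpow_add hy,
      show (-(x + y) / 2 : ℝ) = -x/2 + -y/2 by ring,
      show (-(y + z) / 2 : ℝ) = -y/2 + -z/2 by ring,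
      show (-(x + z) / 2 : ℝ) = -x/2 + -z/2 by ring,
      show (-y : ℝ) = -y/2 + -y/2 by ring,
      Real.exp_add, Real.exp_add, Real.exp_add, Real.exp_add]
    field_simp
    ring
  have h1 : (∫ y in Ioi (0:ℝ),
        (x / y) ^ a * (Real.exp (-(x + y) / 2) / (x + y)) *
          ((z / y) ^ a * (Real.exp (-(y + z) / 2) / (y + z))))
      = ((x * z) ^ a * Real.exp (-(x + z) / 2) * (z - x)⁻¹) *
          ((∫ y in Ioi (0:ℝ), y ^ (-2 * a) * Real.exp (-y) / (x + y))
            - ∫ y in Ioi (0:ℝ), y ^ (-2 * a) * Real.exp (-y) / (z + y)) := by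
    rw [setIntegral_congr_fun measurableSet_Ioi key, integral_const_mul,
      integral_sub (myIntA ha hx) ?hz]
    case hz =>
      have := myIntA ha hz
      exact this
  have hGz' : G z = ∫ y in Ioi (0:ℝ), y ^ (-2 * a) * Real.exp (-y) / (z + y) := by
    rw [hG z hz]
  have A : (∫ y in Ioi (0:ℝ),
        (x / y) ^ a * (Real.exp (-(x + y) / 2) / (x + y)) *
          ((z / y) ^ a * (Real.exp (-(y + z) / 2) / (y + z))))
      = (x * z) ^ a * Real.exp (-(x + z) / 2) * (G x - G z) / (z - x) := by
    rw [h1, ← hGz', ← hG x hx, div_eq_mul_inv]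
    ring
  refine ⟨A, ?_⟩
  rw [A, hG x hx, hG z hz, myKey ha hx, myKey ha hz]
  have hsx : Real.sqrt x = x ^ (1/2 : ℝ) := Real.sqrt_eq_rpow x
  have e1 : x ^ (a + 1/2) = x ^ a * Real.sqrt x := by
    rw [Real.rpow_add hx, Real.sqrt_eq_rpow]
  have e2 : z ^ (a + 1/2) = z ^ a * Real.sqrt z := by
    rw [Real.rpow_add hz, Real.sqrt_eq_rpow]
  rw [e1, e2, Real.sqrt_mul hx.le, Real.mul_rpow hx.le hz.le,
    show (-(x + z) / 2 : ℝ) = -x/2 + -z/2 by ring, Real.exp_add]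
  have hsx0 : Real.sqrt x ≠ 0 := (Real.sqrt_pos.mpr hx).ne'
  have hsz0 : Real.sqrt z ≠ 0 := (Real.sqrt_pos.mpr hz).ne'
  field_simp
  ring
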